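/- Let b : ℕ → ℕ → ℚ be defined by b(1,1) = 1, b(n,m) = 0 whenever n < m or m = 0 or n = 0, and for n ≥ 2 and 1 ≤ m ≤ n, b(n,m) = (2n + m - 2) * ∑_{k=1}^{m} b(n-1,k). Then for all n ≥ 2 and 0 ≤ m ≤ n with m ≥ 1, b satisfies the recurrence b(n,m) = ((2n+m-2)/(2n+m-3)) * b(n,m-1) + (2n+m-2) * b(n-1,m). -/

import Mathlib

/-- The double sequence `b(n,m)` from the enumeration of tree-child networks:
`b(1,1) = 1`, `b(n,m) = 0` if `n < m` or `m = 0` or `n = 0`, and for `n ≥ 2`,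
`1 ≤ m ≤ n`, `b(n,m) = (2n+m-2) * ∑_{k=1}^m b(n-1,k)`. -/
def bseq : ℕ → ℕ → ℚ
  | 0, _ => 0
  | 1, m => if m = 1 then 1 else 0
  | n+2, m =>
      if m = 0 ∨ n + 2 < m then 0
      else ((2*(n+2)+m-2 : ℕ) : ℚ) * ∑ k ∈ Finset.Icc 1 m, bseq (n+1) k

lemma bseq_eq (N m : ℕ) (h1 : 1 ≤ m) (h2 : m ≤ N + 2) :
    bseq (N+2) m = ((2*(N+2)+m-2 : ℕ) : ℚ) * ∑ k ∈ Finset.Icc 1 m, bseq (N+1) k := by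
  rw [bseq]
  simp only [if_neg (by omega : ¬(m = 0 ∨ N + 2 < m))]

theorem bseq_two_term_recurrence (n m : ℕ) (hn : 2 ≤ n) (hm1 : 1 ≤ m) (hmn : m ≤ n) :
    bseq n m = (((2*n+m-2 : ℕ) : ℚ) / ((2*n+m-3 : ℕ) : ℚ)) * bseq n (m-1)
      + ((2*n+m-2 : ℕ) : ℚ) * bseq (n-1) m := by
  obtain ⟨N, rfl⟩ : ∃ N, n = N + 2 := ⟨n - 2, by omega⟩
  rcases eq_or_lt_of_le hm1 with hm | hm
  · -- m = 1
    subst hm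
    have h0 : bseq (N+2) 0 = 0 := by rw [bseq]; simp
    rw [h0, bseq_eq N 1 le_rfl (by omega), Finset.Icc_self, Finset.sum_singleton]
    simp
  · -- 2 ≤ m
    have h2 : 2 ≤ m := hm
    have hS : ∑ k ∈ Finset.Icc 1 m, bseq (N+1) k
        = (∑ k ∈ Finset.Icc 1 (m-1), bseq (N+1) k) + bseq (N+1) m := by
      have : m = (m-1) + 1 := by omega
      rw [this, Finset.sum_Icc_succ_top (by omega)]
      congr 1
    rw [bseq_eq N m hm1 hmn, bseq_eq N (m-1) (by omega) (by omega), hS]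
    have hC' : ((2*(N+2)+(m-1)-2 : ℕ) : ℚ) ≠ 0 := by
      have : (0:ℕ) < 2*(N+2)+(m-1)-2 := by omega
      exact_mod_cast this.ne'
    have hcast : ((2*(N+2)+m-3 : ℕ) : ℚ) = ((2*(N+2)+(m-1)-2 : ℕ) : ℚ) := by
      congr 1; omega
    rw [hcast]
    rw [show N + 2 - 1 = N + 1 by omega]
    field_simp
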